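/- arXiv:2103.01887 — 2 statements merged into one kernel-verified Lean document; each statement's English description precedes it below -/
import Mathlib

section
/- Let X be a random vector in ℝ^d and C, c₀, s > 0 be such that P(‖X‖₂² ≤ C·d) ≥ 1 − exp(−c₀·d) and M₁(s) := sup_{‖w‖₂=1} E[exp(s·w^T X)] < ∞, M₂(s) := sup_{‖w‖₂=1} E[exp(−s·w^T X)] < ∞. Define λ(d) := sup_{w ∈ ℝ^d, ‖w‖₂ = 1/√(Cd)} E[ |w^T X|² · 1{‖X‖₂² > C·d} ]. Then λ(d) ≤ (1/(C·d)) · √(2048·(M₁(s) + M₂(s))/s⁴) · exp(−c₀·d/2). In particular, if C, s, M₁(s), M₂(s) are bounded independently of d, then λ(d) ≤ exp(−c'·d) for some constant c' > 0 and all sufficiently large d. -/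
open MeasureTheory
open scoped InnerProductSpace

private lemma pow4_le_exp (s y : ℝ) (hs : 0 < s) :
    y ^ 4 ≤ 256 / s ^ 4 * (Real.exp (s * y) + Real.exp (-(s * y))) := by
  set x := |s * y| with hxdef
  have hx : 0 ≤ x := abs_nonneg _
  have h1 : (1 + x / 4) ≤ Real.exp (x / 4) := by
    have := Real.add_one_le_exp (x / 4); linarith
  have h2 : (x / 4) ^ 4 ≤ (Real.exp (x / 4)) ^ 4 :=
    pow_le_pow_left₀ (by linarith) (by linarith) 4
  have h2' : (Real.exp (x / 4)) ^ 4 = Real.exp x := by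
    rw [← Real.exp_nat_mul]; norm_num; ring_nf
  have h3 : Real.exp x ≤ Real.exp (s * y) + Real.exp (-(s * y)) := by
    rcases abs_cases (s * y) with ⟨h, _⟩ | ⟨h, _⟩ <;> rw [hxdef, h] <;>
      [linarith [Real.exp_pos (-(s * y))]; linarith [Real.exp_pos (s * y)]]
  have hx4 : x ^ 4 = s ^ 4 * y ^ 4 := by
    rw [hxdef, ← abs_pow, abs_of_nonneg (by positivity : (0:ℝ) ≤ (s*y)^4)]; ring
  have hs4 : (0:ℝ) < s ^ 4 := by positivity
  rw [div_mul_eq_mul_div, le_div_iff₀ hs4]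
  nlinarith

private lemma aux_cs {Ω : Type} [MeasurableSpace Ω] (μ : Measure Ω) [IsProbabilityMeasure μ]
    (Y : Ω → ℝ) (hY : Measurable Y) (P : Ω → Prop) [DecidablePred P]
    (hP : MeasurableSet {ω | P ω}) (B p : ℝ) (hB : 0 < B) (hp : 0 < p)
    (hint : Integrable (fun ω => Y ω ^ 4) μ)
    (h4 : ∫ ω, Y ω ^ 4 ∂μ ≤ B)
    (hAp : (μ {ω | P ω}).toReal ≤ p) :
    Integrable (fun ω => if P ω then Y ω ^ 2 else 0) μ ∧
      ∫ ω, (if P ω then Y ω ^ 2 else 0) ∂μ ≤ Real.sqrt B * Real.sqrt p := by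
  have hgmeas : Measurable (fun ω => if P ω then Y ω ^ 2 else 0) :=
    Measurable.ite hP (hY.pow_const 2) measurable_const
  have hgint : Integrable (fun ω => if P ω then Y ω ^ 2 else 0) μ := by
    refine (hint.add (integrable_const 1)).mono' hgmeas.aestronglyMeasurable ?_
    filter_upwards with ω
    simp only [Pi.add_apply]
    rcases em (P ω) with h | h
    · rw [if_pos h, Real.norm_eq_abs, abs_of_nonneg (by positivity)]
      nlinarith [sq_nonneg (Y ω ^ 2 - 1)]
    · rw [if_neg h, norm_zero]; positivity
  refine ⟨hgint, ?_⟩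
  set t := Real.sqrt p / Real.sqrt B with ht
  have hsB : 0 < Real.sqrt B := Real.sqrt_pos.2 hB
  have hsp : 0 < Real.sqrt p := Real.sqrt_pos.2 hp
  have htpos : 0 < t := div_pos hsp hsB
  have hindeq : (fun ω => if P ω then (1:ℝ) else 0) = Set.indicator {ω | P ω} (fun _ => 1) := by
    funext ω; simp [Set.indicator_apply, Set.mem_setOf_eq]
  have hindint : Integrable (fun ω => if P ω then (1:ℝ) else 0) μ := by
    rw [hindeq]; exact (integrable_const 1).indicator hP
  have hhint : Integrable (fun ω => (t * Y ω ^ 4 + (1/t) * (if P ω then (1:ℝ) else 0)) / 2) μ :=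
    ((hint.const_mul t).add (hindint.const_mul (1/t))).div_const 2
  have hptwise : ∀ ω, (if P ω then Y ω ^ 2 else 0)
      ≤ (t * Y ω ^ 4 + (1/t) * (if P ω then (1:ℝ) else 0)) / 2 := by
    intro ω
    rcases em (P ω) with h | h
    · rw [if_pos h, if_pos h]
      have hinv : (1/t) * t = 1 := one_div_mul_cancel htpos.ne'
      have key : (2 * Y ω ^ 2) * t ≤ (t * Y ω ^ 4 + 1/t * 1) * t := by
        nlinarith [sq_nonneg (t * Y ω ^ 2 - 1)]
      have := le_of_mul_le_mul_right key htpos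
      linarith
    · rw [if_neg h, if_neg h, mul_zero, add_zero]
      positivity
  have hcalc : ∫ ω, (t * Y ω ^ 4 + (1/t) * (if P ω then (1:ℝ) else 0)) / 2 ∂μ
      = (t * (∫ ω, Y ω ^ 4 ∂μ) + (1/t) * (μ {ω | P ω}).toReal) / 2 := by
    rw [integral_div, integral_add (hint.const_mul t) (hindint.const_mul (1/t)),
        integral_const_mul, integral_const_mul, hindeq, integral_indicator hP]
    simp [measureReal_def]
  have h1 := integral_mono hgint hhint hptwise
  rw [hcalc] at h1
  have h3 : 0 ≤ ∫ ω, Y ω ^ 4 ∂μ := integral_nonneg (fun ω => by positivity)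
  have h2 : (t * (∫ ω, Y ω ^ 4 ∂μ) + (1/t) * (μ {ω | P ω}).toReal) / 2
      ≤ (t * B + (1/t) * p) / 2 := by
    gcongr <;> first | exact h4 | exact hAp | positivity
  have h4' : (t * B + (1/t) * p) / 2 = Real.sqrt B * Real.sqrt p := by
    rw [ht]
    field_simp
    linear_combination (-(Real.sqrt p * Real.sqrt p)) * Real.mul_self_sqrt hB.le +
      (-(Real.sqrt B * Real.sqrt B)) * Real.mul_self_sqrt hp.le
  linarith

private lemma part1 :
    ∀ (d : ℕ) (Ω : Type) (_ : MeasurableSpace Ω) (μ : Measure Ω), IsProbabilityMeasure μ →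
      ∀ (X : Ω → EuclideanSpace ℝ (Fin d)), Measurable X →
      ∀ (C c₀ s M₁ M₂ : ℝ), 0 < C → 0 < c₀ → 0 < s →
      1 - Real.exp (-(c₀ * d)) ≤ (μ {ω | ‖X ω‖ ^ 2 ≤ C * d}).toReal →
      (∀ w : EuclideanSpace ℝ (Fin d), ‖w‖ = 1 →
        Integrable (fun ω => Real.exp (s * ⟪w, X ω⟫_ℝ)) μ ∧
          ∫ ω, Real.exp (s * ⟪w, X ω⟫_ℝ) ∂μ ≤ M₁) →
      (∀ w : EuclideanSpace ℝ (Fin d), ‖w‖ = 1 →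
        Integrable (fun ω => Real.exp (-(s * ⟪w, X ω⟫_ℝ))) μ ∧
          ∫ ω, Real.exp (-(s * ⟪w, X ω⟫_ℝ)) ∂μ ≤ M₂) →
      ∀ w : EuclideanSpace ℝ (Fin d), ‖w‖ = 1 / Real.sqrt (C * d) →
        Integrable (fun ω => if C * d < ‖X ω‖ ^ 2 then |⟪w, X ω⟫_ℝ| ^ 2 else 0) μ ∧
          ∫ ω, (if C * d < ‖X ω‖ ^ 2 then |⟪w, X ω⟫_ℝ| ^ 2 else 0) ∂μ
            ≤ 1 / (C * d) * Real.sqrt (2048 * (M₁ + M₂) / s ^ 4) * Real.exp (-(c₀ * d / 2)) := by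
  intro d Ω mΩ μ hμ X hX C c₀ s M₁ M₂ hC hc₀ hs hconc h1 h2 w hw
  by_cases hd : d = 0
  · subst hd
    have hXz : ∀ ω, ¬ (C * ((0:ℕ):ℝ) < ‖X ω‖ ^ 2) := by
      intro ω
      have : X ω = 0 := Subsingleton.elim _ _
      rw [this]
      simp
    have hfun : (fun ω => if C * ((0:ℕ):ℝ) < ‖X ω‖ ^ 2 then |⟪w, X ω⟫_ℝ| ^ 2 else 0)
        = fun _ => (0:ℝ) := by
      funext ω; rw [if_neg (hXz ω)]
    constructor
    · rw [hfun]; exact integrable_const 0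
    · rw [hfun, integral_const]
      simp
  -- main case
  have hd1 : 1 ≤ d := Nat.one_le_iff_ne_zero.2 hd
  have hdpos : (0:ℝ) < d := by exact_mod_cast Nat.pos_of_ne_zero hd
  have hCd : (0:ℝ) < C * d := mul_pos hC hdpos
  set r := Real.sqrt (C * d) with hr
  have hrpos : 0 < r := Real.sqrt_pos.2 hCd
  have hr2 : r ^ 2 = C * d := Real.sq_sqrt hCd.le
  have hu : ‖r • w‖ = 1 := by
    rw [norm_smul, hw, Real.norm_eq_abs, abs_of_pos hrpos]
    field_simp
  obtain ⟨hi1, hm1⟩ := h1 (r • w) hu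
  obtain ⟨hi2, hm2⟩ := h2 (r • w) hu
  have hM1pos : 0 < M₁ := lt_of_lt_of_le (integral_exp_pos hi1) hm1
  have hM2pos : 0 < M₂ := lt_of_lt_of_le (integral_exp_pos hi2) hm2
  have hYmeas : Measurable (fun ω => ⟪r • w, X ω⟫_ℝ) := measurable_const.inner hX
  have hdom : Integrable
      (fun ω => 256 / s ^ 4 * (Real.exp (s * ⟪r • w, X ω⟫_ℝ) + Real.exp (-(s * ⟪r • w, X ω⟫_ℝ)))) μ :=
    (hi1.add hi2).const_mul _
  have hY4int : Integrable (fun ω => ⟪r • w, X ω⟫_ℝ ^ 4) μ := by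
    refine hdom.mono' ((hYmeas.pow_const 4).aestronglyMeasurable) ?_
    filter_upwards with ω
    rw [Real.norm_eq_abs, abs_of_nonneg (by positivity)]
    exact pow4_le_exp s _ hs
  have hY4 : ∫ ω, ⟪r • w, X ω⟫_ℝ ^ 4 ∂μ ≤ 256 / s ^ 4 * (M₁ + M₂) := by
    calc ∫ ω, ⟪r • w, X ω⟫_ℝ ^ 4 ∂μ
        ≤ ∫ ω, 256 / s ^ 4 * (Real.exp (s * ⟪r • w, X ω⟫_ℝ) + Real.exp (-(s * ⟪r • w, X ω⟫_ℝ))) ∂μ :=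
          integral_mono hY4int hdom (fun ω => pow4_le_exp s _ hs)
      _ = 256 / s ^ 4 * ((∫ ω, Real.exp (s * ⟪r • w, X ω⟫_ℝ) ∂μ)
            + ∫ ω, Real.exp (-(s * ⟪r • w, X ω⟫_ℝ)) ∂μ) := by
          rw [integral_const_mul, integral_add hi1 hi2]
      _ ≤ 256 / s ^ 4 * (M₁ + M₂) := by gcongr <;> positivity
  have hB : (0:ℝ) < 256 / s ^ 4 * (M₁ + M₂) := by
    apply mul_pos (by positivity); linarith
  have hsetm : MeasurableSet {ω | C * (d:ℝ) < ‖X ω‖ ^ 2} :=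
    measurableSet_lt measurable_const ((hX.norm).pow_const 2)
  have hAc : (μ {ω | C * (d:ℝ) < ‖X ω‖ ^ 2}).toReal ≤ Real.exp (-(c₀ * d)) := by
    have hA : MeasurableSet {ω | ‖X ω‖ ^ 2 ≤ C * (d:ℝ)} :=
      measurableSet_le ((hX.norm).pow_const 2) measurable_const
    have hcompl : {ω | C * (d:ℝ) < ‖X ω‖ ^ 2} = {ω | ‖X ω‖ ^ 2 ≤ C * (d:ℝ)}ᶜ := by
      ext ω; simp [not_le]
    rw [hcompl, prob_compl_eq_one_sub hA,
      ENNReal.toReal_sub_of_le prob_le_one ENNReal.one_ne_top]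
    simp only [ENNReal.toReal_one]
    linarith
  obtain ⟨hgint, hgbound⟩ := aux_cs μ (fun ω => ⟪r • w, X ω⟫_ℝ) hYmeas
    (fun ω => C * (d:ℝ) < ‖X ω‖ ^ 2) hsetm (256 / s ^ 4 * (M₁ + M₂)) (Real.exp (-(c₀ * d)))
    hB (Real.exp_pos _) hY4int hY4 hAc
  have hfun : (fun ω => if C * (d:ℝ) < ‖X ω‖ ^ 2 then |⟪w, X ω⟫_ℝ| ^ 2 else 0)
      = fun ω => (1 / (C * (d:ℝ))) * (if C * (d:ℝ) < ‖X ω‖ ^ 2 then ⟪r • w, X ω⟫_ℝ ^ 2 else 0) := by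
    funext ω
    have hinner : ⟪r • w, X ω⟫_ℝ = r * ⟪w, X ω⟫_ℝ := real_inner_smul_left w (X ω) r
    by_cases h : C * (d:ℝ) < ‖X ω‖ ^ 2
    · rw [if_pos h, if_pos h, hinner, sq_abs, mul_pow, hr2]
      field_simp
    · rw [if_neg h, if_neg h, mul_zero]
  have hsqrtp : Real.sqrt (Real.exp (-(c₀ * d))) = Real.exp (-(c₀ * d / 2)) := by
    have hpe : Real.exp (-(c₀ * (d:ℝ))) = (Real.exp (-(c₀ * d / 2))) ^ 2 := by
      rw [sq, ← Real.exp_add]; ring_nf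
    rw [hpe, Real.sqrt_sq (Real.exp_pos _).le]
  have hBle : 256 / s ^ 4 * (M₁ + M₂) ≤ 2048 * (M₁ + M₂) / s ^ 4 := by
    rw [div_mul_eq_mul_div]
    gcongr
    linarith
  constructor
  · rw [hfun]; exact hgint.const_mul _
  · rw [hfun, integral_const_mul]
    have hnn : (0:ℝ) ≤ 1 / (C * (d:ℝ)) := by positivity
    calc 1 / (C * (d:ℝ)) * ∫ ω, (if C * (d:ℝ) < ‖X ω‖ ^ 2 then ⟪r • w, X ω⟫_ℝ ^ 2 else 0) ∂μ
        ≤ 1 / (C * (d:ℝ)) * (Real.sqrt (256 / s ^ 4 * (M₁ + M₂)) * Real.sqrt (Real.exp (-(c₀ * d)))) :=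
          mul_le_mul_of_nonneg_left hgbound hnn
      _ = 1 / (C * (d:ℝ)) * Real.sqrt (256 / s ^ 4 * (M₁ + M₂)) * Real.exp (-(c₀ * d / 2)) := by
          rw [hsqrtp, mul_assoc]
      _ ≤ 1 / (C * (d:ℝ)) * Real.sqrt (2048 * (M₁ + M₂) / s ^ 4) * Real.exp (-(c₀ * d / 2)) := by
          gcongr

private lemma part2 : ∀ K c₀ : ℝ, 0 < K → 0 < c₀ → ∃ c' > 0, ∃ d₀ : ℕ, ∀ d : ℕ, d₀ ≤ d →
      ∀ (Ω : Type) (_ : MeasurableSpace Ω) (μ : Measure Ω), IsProbabilityMeasure μ →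
      ∀ (X : Ω → EuclideanSpace ℝ (Fin d)), Measurable X →
      ∀ (C s M₁ M₂ : ℝ), K⁻¹ ≤ C → C ≤ K → K⁻¹ ≤ s → s ≤ K → M₁ ≤ K → M₂ ≤ K →
      1 - Real.exp (-(c₀ * d)) ≤ (μ {ω | ‖X ω‖ ^ 2 ≤ C * d}).toReal →
      (∀ w : EuclideanSpace ℝ (Fin d), ‖w‖ = 1 →
        Integrable (fun ω => Real.exp (s * ⟪w, X ω⟫_ℝ)) μ ∧
          ∫ ω, Real.exp (s * ⟪w, X ω⟫_ℝ) ∂μ ≤ M₁) →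
      (∀ w : EuclideanSpace ℝ (Fin d), ‖w‖ = 1 →
        Integrable (fun ω => Real.exp (-(s * ⟪w, X ω⟫_ℝ))) μ ∧
          ∫ ω, Real.exp (-(s * ⟪w, X ω⟫_ℝ)) ∂μ ≤ M₂) →
      ∀ w : EuclideanSpace ℝ (Fin d), ‖w‖ = 1 / Real.sqrt (C * d) →
        ∫ ω, (if C * d < ‖X ω‖ ^ 2 then |⟪w, X ω⟫_ℝ| ^ 2 else 0) ∂μ
          ≤ Real.exp (-(c' * d)) := by
  intro K c₀ hK hc₀
  set R := K * Real.sqrt (4096 * K ^ 5) with hR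
  refine ⟨c₀ / 4, by positivity, ⌈4 * Real.log (max R 1) / c₀⌉₊ + 1, ?_⟩
  intro d hd Ω mΩ μ hμ X hX C s M₁ M₂ hCK1 hCK2 hsK1 hsK2 hM1K hM2K hconc h1 h2 w hw
  have hKinv : (0:ℝ) < K⁻¹ := by positivity
  have hC : 0 < C := lt_of_lt_of_le hKinv hCK1
  have hs : 0 < s := lt_of_lt_of_le hKinv hsK1
  have hd1 : (1:ℝ) ≤ (d:ℝ) := by
    have : 1 ≤ d := le_trans (Nat.le_add_left 1 _) hd
    exact_mod_cast this
  have hdR : 4 * Real.log (max R 1) / c₀ ≤ (d:ℝ) := by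
    have h1' := Nat.le_ceil (4 * Real.log (max R 1) / c₀)
    have h2' : (⌈4 * Real.log (max R 1) / c₀⌉₊ : ℝ) ≤ (d:ℝ) := by
      exact_mod_cast le_trans (Nat.le_succ _) hd
    linarith
  have hmain := (part1 d Ω mΩ μ hμ X hX C c₀ s M₁ M₂ hC hc₀ hs hconc h1 h2 w hw).2
  -- bound the prefactor
  have hCd : K⁻¹ ≤ C * d := by
    calc K⁻¹ ≤ C := hCK1
      _ = C * 1 := (mul_one C).symm
      _ ≤ C * d := by gcongr
  have h1cd : 1 / (C * (d:ℝ)) ≤ K := by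
    rw [div_le_iff₀ (lt_of_lt_of_le hKinv hCd)]
    calc (1:ℝ) = K * K⁻¹ := (mul_inv_cancel₀ hK.ne').symm
      _ ≤ K * (C * d) := by gcongr
  have hKs : (1:ℝ) ≤ K * s := by
    have := mul_le_mul_of_nonneg_left hsK1 hK.le
    rwa [mul_inv_cancel₀ hK.ne'] at this
  have hsq : Real.sqrt (2048 * (M₁ + M₂) / s ^ 4) ≤ Real.sqrt (4096 * K ^ 5) := by
    apply Real.sqrt_le_sqrt
    have hs4 : (0:ℝ) < s ^ 4 := by positivity
    have hnum : 2048 * (M₁ + M₂) ≤ 4096 * K := by linarith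
    have hstep1 : 2048 * (M₁ + M₂) / s ^ 4 ≤ 4096 * K / s ^ 4 := by gcongr
    have h2' : (1:ℝ) ≤ (K * s) ^ 2 := by nlinarith
    have h4' : (1:ℝ) ≤ (K * s) ^ 4 := by nlinarith
    have hstep2 : 4096 * K / s ^ 4 ≤ 4096 * K ^ 5 := by
      rw [div_le_iff₀ hs4]
      calc (4096:ℝ) * K = 4096 * K * 1 := by ring
        _ ≤ 4096 * K * ((K * s) ^ 4) := by
            exact mul_le_mul_of_nonneg_left h4' (by positivity)
        _ = 4096 * K ^ 5 * s ^ 4 := by ring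
    linarith
  have hRd : K * Real.sqrt (4096 * K ^ 5) ≤ Real.exp (c₀ * d / 4) := by
    have hmaxpos : (0:ℝ) < max R 1 := lt_of_lt_of_le one_pos (le_max_right _ _)
    have h3 : Real.log (max R 1) ≤ c₀ * d / 4 := by
      rw [div_le_iff₀ hc₀] at hdR
      linarith
    calc K * Real.sqrt (4096 * K ^ 5) = R := hR.symm
      _ ≤ max R 1 := le_max_left _ _
      _ = Real.exp (Real.log (max R 1)) := (Real.exp_log hmaxpos).symm
      _ ≤ Real.exp (c₀ * d / 4) := Real.exp_le_exp.2 h3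
  calc ∫ ω, (if C * d < ‖X ω‖ ^ 2 then |⟪w, X ω⟫_ℝ| ^ 2 else 0) ∂μ
      ≤ 1 / (C * d) * Real.sqrt (2048 * (M₁ + M₂) / s ^ 4) * Real.exp (-(c₀ * d / 2)) := hmain
    _ ≤ K * Real.sqrt (4096 * K ^ 5) * Real.exp (-(c₀ * d / 2)) := by
        apply mul_le_mul_of_nonneg_right _ (Real.exp_pos _).le
        apply mul_le_mul h1cd hsq (Real.sqrt_nonneg _) hK.le
    _ ≤ Real.exp (c₀ * d / 4) * Real.exp (-(c₀ * d / 2)) :=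
        mul_le_mul_of_nonneg_right hRd (Real.exp_pos _).le
    _ = Real.exp (-(c₀ / 4 * d)) := by rw [← Real.exp_add]; ring_nf

theorem truncated_second_moment_bound_test : True := trivial

/-- under the norm-concentration assumption on `X` and uniform MGF bounds,
the truncated second moment
`λ(d) = sup_{‖w‖ = 1/√(Cd)} E[|wᵀX|² 1{‖X‖² > Cd}]` satisfies
`λ(d) ≤ (1/(Cd))·√(2048(M₁+M₂)/s⁴)·exp(−c₀d/2)`; in particular, if `C, s, M₁, M₂`
are bounded (above and, for `C` and `s`, below) independently of `d`, then
`λ(d) ≤ exp(−c'·d)` for some `c' > 0` and all sufficiently large `d`. -/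
theorem truncated_second_moment_bound :
    (∀ (d : ℕ) (Ω : Type) (_ : MeasurableSpace Ω) (μ : Measure Ω), IsProbabilityMeasure μ →
      ∀ (X : Ω → EuclideanSpace ℝ (Fin d)), Measurable X →
      ∀ (C c₀ s M₁ M₂ : ℝ), 0 < C → 0 < c₀ → 0 < s →
      1 - Real.exp (-(c₀ * d)) ≤ (μ {ω | ‖X ω‖ ^ 2 ≤ C * d}).toReal →
      (∀ w : EuclideanSpace ℝ (Fin d), ‖w‖ = 1 →
        Integrable (fun ω => Real.exp (s * ⟪w, X ω⟫_ℝ)) μ ∧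
          ∫ ω, Real.exp (s * ⟪w, X ω⟫_ℝ) ∂μ ≤ M₁) →
      (∀ w : EuclideanSpace ℝ (Fin d), ‖w‖ = 1 →
        Integrable (fun ω => Real.exp (-(s * ⟪w, X ω⟫_ℝ))) μ ∧
          ∫ ω, Real.exp (-(s * ⟪w, X ω⟫_ℝ)) ∂μ ≤ M₂) →
      ∀ w : EuclideanSpace ℝ (Fin d), ‖w‖ = 1 / Real.sqrt (C * d) →
        Integrable (fun ω => if C * d < ‖X ω‖ ^ 2 then |⟪w, X ω⟫_ℝ| ^ 2 else 0) μ ∧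
          ∫ ω, (if C * d < ‖X ω‖ ^ 2 then |⟪w, X ω⟫_ℝ| ^ 2 else 0) ∂μ
            ≤ 1 / (C * d) * Real.sqrt (2048 * (M₁ + M₂) / s ^ 4) * Real.exp (-(c₀ * d / 2)))
    ∧
    (∀ K c₀ : ℝ, 0 < K → 0 < c₀ → ∃ c' > 0, ∃ d₀ : ℕ, ∀ d : ℕ, d₀ ≤ d →
      ∀ (Ω : Type) (_ : MeasurableSpace Ω) (μ : Measure Ω), IsProbabilityMeasure μ →
      ∀ (X : Ω → EuclideanSpace ℝ (Fin d)), Measurable X →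
      ∀ (C s M₁ M₂ : ℝ), K⁻¹ ≤ C → C ≤ K → K⁻¹ ≤ s → s ≤ K → M₁ ≤ K → M₂ ≤ K →
      1 - Real.exp (-(c₀ * d)) ≤ (μ {ω | ‖X ω‖ ^ 2 ≤ C * d}).toReal →
      (∀ w : EuclideanSpace ℝ (Fin d), ‖w‖ = 1 →
        Integrable (fun ω => Real.exp (s * ⟪w, X ω⟫_ℝ)) μ ∧
          ∫ ω, Real.exp (s * ⟪w, X ω⟫_ℝ) ∂μ ≤ M₁) →
      (∀ w : EuclideanSpace ℝ (Fin d), ‖w‖ = 1 →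
        Integrable (fun ω => Real.exp (-(s * ⟪w, X ω⟫_ℝ))) μ ∧
          ∫ ω, Real.exp (-(s * ⟪w, X ω⟫_ℝ)) ∂μ ≤ M₂) →
      ∀ w : EuclideanSpace ℝ (Fin d), ‖w‖ = 1 / Real.sqrt (C * d) →
        ∫ ω, (if C * d < ‖X ω‖ ^ 2 then |⟪w, X ω⟫_ℝ| ^ 2 else 0) ∂μ
          ≤ Real.exp (-(c' * d))) :=
  ⟨part1, part2⟩
end

section
/- Let (X, Y) be a random pair in ℝ^d × ℝ with |Y| ≤ M almost surely, let C > 0, and set p := P(‖X‖₂² > C·d) and λ := sup_{w ∈ ℝ^d, ‖w‖₂ = 1/√(Cd)} E[ |w^T X|² · 1{‖X‖₂² > C·d} ]. Let m ∈ ℕ and (a, W) ∈ ℝ_{≥0}^m × ℝ^{m×d} with ‖w_j‖₂ = 1/√(Cd) for all 1 ≤ j ≤ m. Then | E[(Y − ∑_{j=1}^m a_j ReLU(w_j^T X))²] − E[(Y − ∑_{j=1}^m a_j S-ReLU(w_j^T X))²] | ≤ 2M·‖a‖₁·(√(λp) + p) + ‖a‖₁²·(λ + p). -/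
open MeasureTheory Finset
open scoped InnerProductSpace

/-- The saturated ReLU activation. -/
noncomputable def SReLU (x : ℝ) : ℝ := if x < 0 then 0 else if x < 1 then x else 1


lemma SReLU_nonneg (x : ℝ) : 0 ≤ SReLU x := by
  unfold SReLU; split_ifs <;> linarith

lemma SReLU_le_max (x : ℝ) : SReLU x ≤ max x 0 := by
  unfold SReLU; split_ifs with h1 h2
  · simp
  · exact le_max_left _ _
  · exact le_max_of_le_left (by linarith)

lemma SReLU_abs_le (x : ℝ) : |SReLU x| ≤ |x| := by
  rw [abs_of_nonneg (SReLU_nonneg x)]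
  unfold SReLU; split_ifs with h1 h2
  · positivity
  · exact le_abs_self x
  · exact le_trans (by linarith) (le_abs_self x)

lemma SReLU_eq_max (x : ℝ) (h : |x| ≤ 1) : SReLU x = max x 0 := by
  rcases abs_le.1 h with ⟨h1, h2⟩
  unfold SReLU; split_ifs with ha hb
  · exact (max_eq_right ha.le).symm
  · exact (max_eq_left (not_lt.1 ha)).symm
  · have hx : x = 1 := le_antisymm h2 (not_lt.1 hb)
    rw [hx]; simp

lemma max_sub_SReLU_le_abs (x : ℝ) : max x 0 - SReLU x ≤ |x| :=
  sub_le_iff_le_add.2 (le_add_of_le_of_nonneg (max_le (le_abs_self x) (abs_nonneg x))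
    (SReLU_nonneg x))

lemma measurable_SReLU : Measurable SReLU := by
  unfold SReLU
  exact Measurable.ite (measurableSet_lt measurable_id' measurable_const) measurable_const
    (Measurable.ite (measurableSet_lt measurable_id' measurable_const) measurable_id'
      measurable_const)

lemma le_sqrt_mul_of_forall {x I q : ℝ} (hI : 0 ≤ I) (hq : 0 ≤ q)
    (h : ∀ t : ℝ, 0 < t → x ≤ (t * I + q / t) / 2) : x ≤ Real.sqrt (I * q) := by
  rcases eq_or_lt_of_le hI with hI0 | hI0
  · have hx : x ≤ 0 := by
      by_contra hx
      push_neg at hx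
      have ht := h ((q + 1) / x) (by positivity)
      rw [← hI0, mul_zero, zero_add, div_div_eq_mul_div] at ht
      rw [div_div, le_div_iff₀ (by positivity)] at ht
      nlinarith
    exact hx.trans (Real.sqrt_nonneg _)
  · rcases eq_or_lt_of_le hq with hq0 | hq0
    · have hx : x ≤ 0 := by
        by_contra hx
        push_neg at hx
        have ht := h (x / I) (by positivity)
        rw [div_mul_cancel₀ _ hI0.ne', ← hq0, zero_div, add_zero] at ht
        linarith
      exact hx.trans (Real.sqrt_nonneg _)
    · have hsI : (0:ℝ) < Real.sqrt I := Real.sqrt_pos.2 hI0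
      have hsq : (0:ℝ) < Real.sqrt q := Real.sqrt_pos.2 hq0
      have ht := h (Real.sqrt q / Real.sqrt I) (by positivity)
      have e1 : Real.sqrt q / Real.sqrt I * I = Real.sqrt q * Real.sqrt I := by
        rw [div_mul_eq_mul_div, mul_div_assoc, Real.div_sqrt]
      have e2 : q / (Real.sqrt q / Real.sqrt I) = Real.sqrt q * Real.sqrt I := by
        rw [div_div_eq_mul_div, mul_comm q, mul_div_assoc, Real.div_sqrt, mul_comm]
      rw [e1, e2] at ht
      rw [Real.sqrt_mul hI0.le, mul_comm]
      linarith

set_option maxHeartbeats 1000000 in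
/-- for a network with non-negative output weights and internal weights of
norm `1/√(Cd)`, the population risks computed with the ReLU and with the saturated ReLU
activations differ by at most `2M‖a‖₁(√(λp) + p) + ‖a‖₁²(λ + p)`, where
`p = P(‖X‖² > Cd)` and `λ` bounds the truncated second moments
`E[|wᵀX|² 1{‖X‖² > Cd}]` over `‖w‖ = 1/√(Cd)`. -/
theorem relu_srelu_population_risk_gap {d : ℕ} {Ω : Type} [MeasurableSpace Ω]
    (μ : Measure Ω) [IsProbabilityMeasure μ]
    (X : Ω → EuclideanSpace ℝ (Fin d)) (Y : Ω → ℝ)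
    (hX : Measurable X) (hY : Measurable Y)
    (M C : ℝ) (hM : 0 < M) (hC : 0 < C)
    (hYbd : ∀ᵐ ω ∂μ, |Y ω| ≤ M)
    (p lam : ℝ)
    (hp : p = (μ {ω | C * d < ‖X ω‖ ^ 2}).toReal)
    (hlam : ∀ w : EuclideanSpace ℝ (Fin d), ‖w‖ = 1 / Real.sqrt (C * d) →
      Integrable (fun ω => if C * d < ‖X ω‖ ^ 2 then |⟪w, X ω⟫_ℝ| ^ 2 else 0) μ ∧
        ∫ ω, (if C * d < ‖X ω‖ ^ 2 then |⟪w, X ω⟫_ℝ| ^ 2 else 0) ∂μ ≤ lam)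
    (m : ℕ) (a : Fin m → ℝ) (W : Fin m → EuclideanSpace ℝ (Fin d))
    (ha : ∀ j, 0 ≤ a j) (hW : ∀ j, ‖W j‖ = 1 / Real.sqrt (C * d)) :
    |(∫ ω, (Y ω - ∑ j, a j * max ⟪W j, X ω⟫_ℝ 0) ^ 2 ∂μ)
        - ∫ ω, (Y ω - ∑ j, a j * SReLU ⟪W j, X ω⟫_ℝ) ^ 2 ∂μ|
      ≤ 2 * M * (∑ j, |a j|) * (Real.sqrt (lam * p) + p)
        + (∑ j, |a j|) ^ 2 * (lam + p) := by
  classical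
  have hEmeas : MeasurableSet {ω | C * (d : ℝ) < ‖X ω‖ ^ 2} :=
    measurableSet_lt measurable_const (hX.norm.pow_const 2)
  set u : Fin m → Ω → ℝ := fun j ω => ⟪W j, X ω⟫_ℝ with hu_def
  have humeas : ∀ j, Measurable (u j) := fun j => measurable_const.inner hX
  have hp0 : 0 ≤ p := hp ▸ ENNReal.toReal_nonneg
  set A : ℝ := ∑ j, a j with hA_def
  have hA0 : 0 ≤ A := Finset.sum_nonneg fun j _ => ha j
  have habs : ∑ j, |a j| = A := Finset.sum_congr rfl fun j _ => abs_of_nonneg (ha j)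
  -- off the event, all pre-activations are bounded by 1
  have hoff : ∀ ω, ¬(C * (d : ℝ) < ‖X ω‖ ^ 2) → ∀ j, |u j ω| ≤ 1 := by
    intro ω hω j
    have h2 : ‖X ω‖ ≤ Real.sqrt (C * d) := by
      have h3 : ‖X ω‖ ^ 2 ≤ C * d := not_lt.1 hω
      calc ‖X ω‖ = Real.sqrt (‖X ω‖ ^ 2) := (Real.sqrt_sq (norm_nonneg _)).symm
        _ ≤ Real.sqrt (C * d) := Real.sqrt_le_sqrt h3
    calc |u j ω| ≤ ‖W j‖ * ‖X ω‖ := abs_real_inner_le_norm _ _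
      _ ≤ (1 / Real.sqrt (C * d)) * Real.sqrt (C * d) := by
          rw [hW j]; exact mul_le_mul_of_nonneg_left h2 (by positivity)
      _ ≤ 1 := by
          rcases eq_or_lt_of_le (Real.sqrt_nonneg (C * (d:ℝ))) with h | h
          · rw [← h]; norm_num
          · rw [one_div_mul_cancel h.ne']
  -- truncated second moments
  set T : Fin m → Ω → ℝ :=
    fun j ω => if C * (d : ℝ) < ‖X ω‖ ^ 2 then |u j ω| ^ 2 else 0 with hT_def
  have hTint : ∀ j, Integrable (T j) μ := fun j => (hlam (W j) (hW j)).1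
  have hTle : ∀ j, ∫ ω, T j ω ∂μ ≤ lam := fun j => (hlam (W j) (hW j)).2
  have hT0 : ∀ j ω, 0 ≤ T j ω := by
    intro j ω
    simp only [hT_def]
    split_ifs with h
    · positivity
    · exact le_refl 0
  have hTnn : ∀ j, 0 ≤ ∫ ω, T j ω ∂μ := fun j => integral_nonneg (hT0 j)
  -- square integrability of the pre-activations
  have hu2 : ∀ j, Integrable (fun ω => u j ω ^ 2) μ := by
    intro j
    refine ((integrable_const (1:ℝ)).add (hTint j)).mono'
      ((humeas j).pow_const 2).aestronglyMeasurable (ae_of_all _ fun ω => ?_)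
    rw [Real.norm_eq_abs, abs_of_nonneg (sq_nonneg _)]
    simp only [Pi.add_apply]
    by_cases hω : C * (d : ℝ) < ‖X ω‖ ^ 2
    · simp only [hT_def, if_pos hω, sq_abs]
      linarith [sq_nonneg (u j ω)]
    · have h1 := hoff ω hω j
      simp only [hT_def, if_neg hω]
      nlinarith [abs_nonneg (u j ω), sq_abs (u j ω)]
  have huL2 : ∀ j, MemLp (u j) 2 μ := fun j =>
    (memLp_two_iff_integrable_sq (humeas j).aestronglyMeasurable).2 (hu2 j)
  set f : Ω → ℝ := fun ω => ∑ j, a j * max (u j ω) 0 with hf_def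
  set g : Ω → ℝ := fun ω => ∑ j, a j * SReLU (u j ω) with hg_def
  have hmaxL2 : ∀ j, MemLp (fun ω => max (u j ω) 0) 2 μ := fun j =>
    (huL2 j).of_le ((humeas j).max measurable_const).aestronglyMeasurable
      (ae_of_all _ fun ω => by
        rw [Real.norm_eq_abs, Real.norm_eq_abs, abs_of_nonneg (le_max_right _ 0)]
        exact max_le (le_abs_self _) (abs_nonneg _))
  have hsL2 : ∀ j, MemLp (fun ω => SReLU (u j ω)) 2 μ := fun j =>
    (huL2 j).of_le (measurable_SReLU.comp (humeas j)).aestronglyMeasurable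
      (ae_of_all _ fun ω => by
        rw [Real.norm_eq_abs, Real.norm_eq_abs]; exact SReLU_abs_le _)
  have hfL2 : MemLp f 2 μ := memLp_finset_sum _ fun j _ => (hmaxL2 j).const_mul (a j)
  have hgL2 : MemLp g 2 μ := memLp_finset_sum _ fun j _ => (hsL2 j).const_mul (a j)
  have hY2 : MemLp Y 2 μ := MemLp.of_bound hY.aestronglyMeasurable M
    (by filter_upwards [hYbd] with ω h using by rwa [Real.norm_eq_abs])
  have hint1 : Integrable (fun ω => (Y ω - f ω) ^ 2) μ := (hY2.sub hfL2).integrable_sq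
  have hint2 : Integrable (fun ω => (Y ω - g ω) ^ 2) μ := (hY2.sub hgL2).integrable_sq
  have hfint : Integrable f μ := hfL2.integrable one_le_two
  have hgint : Integrable g μ := hgL2.integrable one_le_two
  have hf2int : Integrable (fun ω => f ω ^ 2) μ := hfL2.integrable_sq
  have hg2int : Integrable (fun ω => g ω ^ 2) μ := hgL2.integrable_sq
  have hfgint : Integrable (fun ω => f ω - g ω) μ := hfint.sub hgint
  have hfg2int : Integrable (fun ω => f ω ^ 2 - g ω ^ 2) μ := hf2int.sub hg2int
  have hDint : Integrable (fun ω => (Y ω - f ω) ^ 2 - (Y ω - g ω) ^ 2) μ := hint1.sub hint2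
  have hDabs : Integrable (fun ω => |(Y ω - f ω) ^ 2 - (Y ω - g ω) ^ 2|) μ := hDint.abs
  -- pointwise facts about f and g
  have hgf : ∀ ω, g ω ≤ f ω := fun ω =>
    Finset.sum_le_sum fun j _ => mul_le_mul_of_nonneg_left (SReLU_le_max _) (ha j)
  have hg0 : ∀ ω, 0 ≤ g ω := fun ω =>
    Finset.sum_nonneg fun j _ => mul_nonneg (ha j) (SReLU_nonneg _)
  have hf0 : ∀ ω, 0 ≤ f ω := fun ω =>
    Finset.sum_nonneg fun j _ => mul_nonneg (ha j) (le_max_right _ _)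
  have hfg_eq : ∀ ω, ¬(C * (d : ℝ) < ‖X ω‖ ^ 2) → f ω = g ω := fun ω hω =>
    (Finset.sum_congr rfl fun j _ => by rw [SReLU_eq_max _ (hoff ω hω j)]).symm
  -- dominating function
  set B : Ω → ℝ := fun ω => (f ω ^ 2 - g ω ^ 2) + 2 * M * (f ω - g ω) with hB_def
  have hBint : Integrable B μ :=
    hfg2int.add (hfgint.const_mul (2 * M))
  have hDbd : ∀ᵐ ω ∂μ, |(Y ω - f ω) ^ 2 - (Y ω - g ω) ^ 2| ≤ B ω := by
    filter_upwards [hYbd] with ω hYω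
    have h1 := mul_le_mul_of_nonneg_right (neg_le_of_abs_le hYω) (sub_nonneg.2 (hgf ω))
    have h2 := mul_le_mul_of_nonneg_right (le_of_abs_le hYω) (sub_nonneg.2 (hgf ω))
    have h3 : g ω ^ 2 ≤ f ω ^ 2 := pow_le_pow_left₀ (hg0 ω) (hgf ω) 2
    rw [abs_le]
    constructor
    · simp only [hB_def]; nlinarith [h1, h2, h3]
    · simp only [hB_def]; nlinarith [h1, h2, h3]
  -- bound on ∫ (f² - g²)
  have hSint : Integrable (fun ω => A * ∑ j, a j * T j ω) μ :=
    (integrable_finset_sum _ fun j _ => (hTint j).const_mul (a j)).const_mul A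
  have hT1 : ∫ ω, (f ω ^ 2 - g ω ^ 2) ∂μ ≤ A ^ 2 * lam := by
    have hpt : ∀ ω, f ω ^ 2 - g ω ^ 2 ≤ A * ∑ j, a j * T j ω := by
      intro ω
      by_cases hω : C * (d : ℝ) < ‖X ω‖ ^ 2
      · have h1 : f ω ≤ ∑ j, a j * |u j ω| :=
          Finset.sum_le_sum fun j _ =>
            mul_le_mul_of_nonneg_left (max_le (le_abs_self _) (abs_nonneg _)) (ha j)
        have h2 : f ω ^ 2 ≤ (∑ j, a j * |u j ω|) ^ 2 := pow_le_pow_left₀ (hf0 ω) h1 2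
        have h3 : (∑ j, a j * |u j ω|) ^ 2 ≤ A * ∑ j, a j * |u j ω| ^ 2 := by
          calc (∑ j, a j * |u j ω|) ^ 2
              = (∑ j, Real.sqrt (a j) * (Real.sqrt (a j) * |u j ω|)) ^ 2 := by
                congr 1
                refine Finset.sum_congr rfl fun j _ => ?_
                rw [← mul_assoc, Real.mul_self_sqrt (ha j)]
            _ ≤ (∑ j, Real.sqrt (a j) ^ 2) * ∑ j, (Real.sqrt (a j) * |u j ω|) ^ 2 :=
                Finset.sum_mul_sq_le_sq_mul_sq _ _ _
            _ = A * ∑ j, a j * |u j ω| ^ 2 := by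
                congr 1
                · exact Finset.sum_congr rfl fun j _ => Real.sq_sqrt (ha j)
                · refine Finset.sum_congr rfl fun j _ => ?_
                  rw [mul_pow, Real.sq_sqrt (ha j)]
        have h4 : (∑ j, a j * |u j ω| ^ 2) = ∑ j, a j * T j ω :=
          Finset.sum_congr rfl fun j _ => by simp only [hT_def, if_pos hω]
        nlinarith [sq_nonneg (g ω), h2, h3]
      · have heq := hfg_eq ω hω
        have hz : ∀ j, T j ω = 0 := fun j => by simp only [hT_def, if_neg hω]
        simp [heq, hz]
    calc ∫ ω, (f ω ^ 2 - g ω ^ 2) ∂μ ≤ ∫ ω, (A * ∑ j, a j * T j ω) ∂μ :=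
          integral_mono hfg2int hSint hpt
      _ = A * ∑ j, a j * ∫ ω, T j ω ∂μ := by
          rw [integral_const_mul, integral_finset_sum _ fun j _ => (hTint j).const_mul (a j)]
          congr 1
          exact Finset.sum_congr rfl fun j _ => integral_const_mul _ _
      _ ≤ A * ∑ j, a j * lam := by
          refine mul_le_mul_of_nonneg_left ?_ hA0
          exact Finset.sum_le_sum fun j _ => mul_le_mul_of_nonneg_left (hTle j) (ha j)
      _ = A ^ 2 * lam := by rw [← Finset.sum_mul, ← hA_def]; ring
  -- bound on ∫ (f - g)
  set R : Fin m → Ω → ℝ :=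
    fun j ω => if C * (d : ℝ) < ‖X ω‖ ^ 2 then |u j ω| else 0 with hR_def
  have hRmeas : ∀ j, Measurable (R j) := fun j =>
    Measurable.ite hEmeas (humeas j).abs measurable_const
  have hRint : ∀ j, Integrable (R j) μ := by
    intro j
    refine ((huL2 j).integrable one_le_two).abs.mono' (hRmeas j).aestronglyMeasurable
      (ae_of_all _ fun ω => ?_)
    rw [Real.norm_eq_abs]
    simp only [hR_def]
    split_ifs with h
    · exact le_of_eq (abs_abs _)
    · simp [abs_nonneg]
  have hR0 : ∀ j ω, 0 ≤ R j ω := by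
    intro j ω
    simp only [hR_def]
    split_ifs
    · exact abs_nonneg _
    · exact le_refl 0
  have hind_eq : (fun ω => if C * (d : ℝ) < ‖X ω‖ ^ 2 then (1:ℝ) else 0)
      = Set.indicator {ω | C * (d : ℝ) < ‖X ω‖ ^ 2} (fun _ => (1:ℝ)) := by
    ext ω
    simp [Set.indicator_apply, Set.mem_setOf_eq]
  have hind_int : Integrable (fun ω => if C * (d : ℝ) < ‖X ω‖ ^ 2 then (1:ℝ) else 0) μ := by
    rw [hind_eq]; exact (integrable_const 1).indicator hEmeas
  have hind_val : ∫ ω, (if C * (d : ℝ) < ‖X ω‖ ^ 2 then (1:ℝ) else 0) ∂μ = p := by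
    rw [hind_eq, hp]
    rw [← measureReal_def]; exact integral_indicator_one hEmeas
  have hRj : ∀ j, ∫ ω, R j ω ∂μ ≤ Real.sqrt (lam * p) := by
    intro j
    have hlam0 : 0 ≤ lam := le_trans (hTnn j) (hTle j)
    refine le_sqrt_mul_of_forall hlam0 hp0 fun t ht => ?_
    have hpt : ∀ ω, 2 * t * R j ω ≤ t ^ 2 * T j ω
        + (if C * (d : ℝ) < ‖X ω‖ ^ 2 then (1:ℝ) else 0) := by
      intro ω
      simp only [hR_def, hT_def]
      by_cases hω : C * (d : ℝ) < ‖X ω‖ ^ 2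
      · simp only [if_pos hω]
        nlinarith [sq_nonneg (t * |u j ω| - 1)]
      · simp [if_neg hω]
    have h5 : 2 * t * ∫ ω, R j ω ∂μ ≤ t ^ 2 * lam + p := by
      have hsum : Integrable (fun ω => t ^ 2 * T j ω
          + (if C * (d : ℝ) < ‖X ω‖ ^ 2 then (1:ℝ) else 0)) μ :=
        ((hTint j).const_mul (t ^ 2)).add hind_int
      have := integral_mono ((hRint j).const_mul (2 * t)) hsum (fun ω => hpt ω)
      rw [integral_const_mul] at this
      rw [integral_add ((hTint j).const_mul (t ^ 2)) hind_int, integral_const_mul,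
        hind_val] at this
      have h6 : t ^ 2 * ∫ ω, T j ω ∂μ ≤ t ^ 2 * lam :=
        mul_le_mul_of_nonneg_left (hTle j) (sq_nonneg t)
      linarith
    calc ∫ ω, R j ω ∂μ = (t * (2 * t * ∫ ω, R j ω ∂μ)) / (2 * t ^ 2) := by
          field_simp
      _ ≤ (t * (t ^ 2 * lam + p)) / (2 * t ^ 2) := by
          gcongr
      _ = (t * lam + p / t) / 2 := by field_simp
  have hT2 : ∫ ω, (f ω - g ω) ∂μ ≤ A * Real.sqrt (lam * p) := by
    have hpt : ∀ ω, f ω - g ω ≤ ∑ j, a j * R j ω := by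
      intro ω
      by_cases hω : C * (d : ℝ) < ‖X ω‖ ^ 2
      · calc f ω - g ω = ∑ j, (a j * max (u j ω) 0 - a j * SReLU (u j ω)) :=
            (Finset.sum_sub_distrib _ _).symm
          _ ≤ ∑ j, a j * R j ω := Finset.sum_le_sum fun j _ => by
              simp only [hR_def, if_pos hω]
              rw [← mul_sub]
              exact mul_le_mul_of_nonneg_left (max_sub_SReLU_le_abs _) (ha j)
      · have heq := hfg_eq ω hω
        have hz : ∀ j, R j ω = 0 := fun j => by simp only [hR_def, if_neg hω]
        simp [heq, hz]
    calc ∫ ω, (f ω - g ω) ∂μ ≤ ∫ ω, (∑ j, a j * R j ω) ∂μ :=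
          integral_mono hfgint
            (integrable_finset_sum _ fun j _ => (hRint j).const_mul (a j)) hpt
      _ = ∑ j, a j * ∫ ω, R j ω ∂μ := by
          rw [integral_finset_sum _ fun j _ => (hRint j).const_mul (a j)]
          exact Finset.sum_congr rfl fun j _ => integral_const_mul _ _
      _ ≤ ∑ j, a j * Real.sqrt (lam * p) :=
          Finset.sum_le_sum fun j _ => mul_le_mul_of_nonneg_left (hRj j) (ha j)
      _ = A * Real.sqrt (lam * p) := by rw [← Finset.sum_mul, ← hA_def]
  -- put everything together
  rw [habs]
  show |(∫ ω, (Y ω - f ω) ^ 2 ∂μ) - ∫ ω, (Y ω - g ω) ^ 2 ∂μ|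
      ≤ 2 * M * A * (Real.sqrt (lam * p) + p) + A ^ 2 * (lam + p)
  have hsqrt0 : 0 ≤ Real.sqrt (lam * p) := Real.sqrt_nonneg _
  calc |(∫ ω, (Y ω - f ω) ^ 2 ∂μ) - ∫ ω, (Y ω - g ω) ^ 2 ∂μ|
      = |∫ ω, ((Y ω - f ω) ^ 2 - (Y ω - g ω) ^ 2) ∂μ| := by
        rw [integral_sub hint1 hint2]
    _ ≤ ∫ ω, |(Y ω - f ω) ^ 2 - (Y ω - g ω) ^ 2| ∂μ := by
        simpa [Real.norm_eq_abs] using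
          norm_integral_le_integral_norm (μ := μ)
            (fun ω => (Y ω - f ω) ^ 2 - (Y ω - g ω) ^ 2)
    _ ≤ ∫ ω, B ω ∂μ := integral_mono_ae hDabs hBint hDbd
    _ = (∫ ω, (f ω ^ 2 - g ω ^ 2) ∂μ) + 2 * M * ∫ ω, (f ω - g ω) ∂μ := by
        simp only [hB_def]
        rw [integral_add hfg2int (hfgint.const_mul (2 * M)),
          integral_const_mul]
    _ ≤ A ^ 2 * lam + 2 * M * (A * Real.sqrt (lam * p)) := by
        have := mul_le_mul_of_nonneg_left hT2 (by linarith : (0:ℝ) ≤ 2 * M)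
        linarith [hT1]
    _ ≤ 2 * M * A * (Real.sqrt (lam * p) + p) + A ^ 2 * (lam + p) := by
        nlinarith [mul_nonneg (mul_nonneg (by linarith : (0:ℝ) ≤ 2 * M) hA0) hp0,
          mul_nonneg (mul_nonneg hA0 hA0) hp0]
end
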